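/- Let F be a finite field with q elements and K a field extension of F of degree n. For α ∈ K define Q_α := Π_{j=0}^{n−1} (x − α^{q^j}), a monic polynomial of degree n whose coefficients lie in F. Then for every monic polynomial h ∈ F[x] of degree ℓ+t with h(0) ≠ 0: Σ_{k | n} (n/k) · #{f ∈ F[x] : f monic irreducible, deg f = n/k, f(0) ≠ 0, and f^k is type-I equivalent to h} = #{α ∈ K : α ≠ 0 and Q_α is type-I equivalent to h}. -/

import Mathlib

open Polynomial

/-- Two monic polynomials with nonzero constant term are type-I equivalent if their
reversals agree modulo `X^(ℓ+1)` and they agree modulo `X^t`. -/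
def TypeIEquiv {R : Type*} [CommRing R] (ℓ t : ℕ) (f g : Polynomial R) : Prop :=
  (X ^ (ℓ + 1) : Polynomial R) ∣ (f.reverse - g.reverse) ∧
  (X ^ t : Polynomial R) ∣ (f - g)

section helpers
set_option linter.unusedSectionVars false
open IntermediateField

variable {F K : Type*} [Field F] [Fintype F] [Field K] [Algebra F K]

lemma aux_fix (c : F) : (algebraMap F K c) ^ (Fintype.card F) = algebraMap F K c := by
  rw [← map_pow, FiniteField.pow_card]

lemma aux_aeval_pow (f : F[X]) (β : K) :
    aeval (β ^ Fintype.card F) f = (aeval β f) ^ Fintype.card F := by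
  obtain ⟨p, hp⟩ := CharP.exists F
  haveI : CharP F p := hp
  obtain ⟨m, hpprime, hcard⟩ := FiniteField.card F p
  haveI : CharP K p := charP_of_injective_algebraMap (algebraMap F K).injective p
  haveI : Fact p.Prime := ⟨hpprime⟩
  let ψ : K →+* K := iterateFrobenius K p m
  have hψ : ∀ x : K, ψ x = x ^ Fintype.card F := fun x => by
    rw [iterateFrobenius_def, hcard]
  have hcomp : ψ.comp (algebraMap F K) = algebraMap F K := by
    ext c
    simp only [RingHom.comp_apply, hψ, aux_fix]
  calc aeval (β ^ Fintype.card F) f = eval₂ (algebraMap F K) (ψ β) f := by rw [hψ, aeval_def]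
    _ = eval₂ (ψ.comp (algebraMap F K)) (ψ β) f := by rw [hcomp]
    _ = ψ (eval₂ (algebraMap F K) β f) := (hom_eval₂ f (algebraMap F K) ψ β).symm
    _ = (aeval β f) ^ Fintype.card F := by rw [hψ, aeval_def]

lemma aux_aeval_pow_pow (f : F[X]) (β : K) (j : ℕ) :
    aeval (β ^ (Fintype.card F) ^ j) f = (aeval β f) ^ (Fintype.card F) ^ j := by
  induction j with
  | zero => simp
  | succ j ih =>
    rw [pow_succ, pow_mul, pow_mul, aux_aeval_pow, ih]

-- all elements of F⟮α⟯ are fixed by x ↦ x^(q^e) if α is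
lemma aux_min_period [FiniteDimensional F K] (α : K) (e : ℕ) (he : 1 ≤ e)
    (hfix : α ^ (Fintype.card F) ^ e = α) : (minpoly F α).natDegree ≤ e := by
  have hq2 : 1 < Fintype.card F := Fintype.one_lt_card
  have hint : IsIntegral F α := IsIntegral.of_finite F α
  set q := Fintype.card F
  set d := (minpoly F α).natDegree with hd
  -- every element of F⟮α⟯ is fixed
  have hfixall : ∀ β : K, β ∈ F⟮α⟯ → β ^ q ^ e = β := by
    intro β hβ
    have : β ∈ Algebra.adjoin F ({α} : Set K) := by
      rw [← IntermediateField.adjoin_simple_toSubalgebra_of_isAlgebraic hint.isAlgebraic] at *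
      exact hβ
    rw [Algebra.adjoin_singleton_eq_range_aeval] at this
    obtain ⟨g, hg⟩ := this
    have hg' : aeval α g = β := hg
    rw [← hg', ← aux_aeval_pow_pow g α e, hfix]
  -- F⟮α⟯ has q^d elements, all roots of X^(q^e) - X which has ≤ q^e roots
  haveI : FiniteDimensional F F⟮α⟯ := inferInstance
  haveI : Fintype F⟮α⟯ := Module.fintypeOfFintype (Module.finBasis F F⟮α⟯)
  have hcardE : Fintype.card F⟮α⟯ = q ^ d := by
    rw [Module.card_eq_pow_finrank (K := F) (V := F⟮α⟯), IntermediateField.adjoin.finrank hint]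
  have hne : (X ^ q ^ e - X : K[X]) ≠ 0 :=
    FiniteField.X_pow_card_pow_sub_X_ne_zero K (by omega) hq2
  classical
  have hroot : ∀ β : F⟮α⟯, (β : K) ∈ (X ^ q ^ e - X : K[X]).roots.toFinset := by
    intro β
    rw [Multiset.mem_toFinset, mem_roots hne]
    simp only [IsRoot.def, eval_sub, eval_pow, eval_X, sub_eq_zero]
    exact_mod_cast hfixall (β : K) β.2
  have hinj : Function.Injective (fun β : F⟮α⟯ => (β : K)) := Subtype.val_injective
  have hle : Fintype.card F⟮α⟯ ≤ (X ^ q ^ e - X : K[X]).roots.toFinset.card := by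
    rw [← Finset.card_univ]
    exact Finset.card_le_card_of_injOn (fun β : F⟮α⟯ => (β : K))
      (fun β _ => hroot β) (fun a _ b _ hab => hinj hab)
  have hle2 : (X ^ q ^ e - X : K[X]).roots.toFinset.card ≤ q ^ e := by
    refine le_trans (Multiset.toFinset_card_le _) ?_
    refine le_trans (Polynomial.card_roots' _) ?_
    rw [FiniteField.X_pow_card_pow_sub_X_natDegree_eq K (by omega) hq2]
  rw [hcardE] at hle
  exact (Nat.pow_le_pow_iff_right hq2).mp (le_trans hle hle2)

lemma aux_fix_d [FiniteDimensional F K] (α : K) :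
    α ^ (Fintype.card F) ^ (minpoly F α).natDegree = α := by
  have hint : IsIntegral F α := IsIntegral.of_finite F α
  haveI : Fintype F⟮α⟯ := Module.fintypeOfFintype (Module.finBasis F F⟮α⟯)
  have hcardE : Fintype.card F⟮α⟯ = Fintype.card F ^ (minpoly F α).natDegree := by
    rw [Module.card_eq_pow_finrank (K := F) (V := F⟮α⟯), IntermediateField.adjoin.finrank hint]
  have := FiniteField.pow_card (IntermediateField.AdjoinSimple.gen F α)
  rw [hcardE] at this
  have := congrArg (algebraMap F⟮α⟯ K) this
  rwa [map_pow] at this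

-- injectivity of x ↦ x^(q^i)
lemma aux_pow_inj (i : ℕ) : Function.Injective (fun x : K => x ^ (Fintype.card F) ^ i) := by
  obtain ⟨p, hp⟩ := CharP.exists F
  haveI : CharP F p := hp
  obtain ⟨m, hpprime, hcard⟩ := FiniteField.card F p
  haveI : CharP K p := charP_of_injective_algebraMap (algebraMap F K).injective p
  haveI : Fact p.Prime := ⟨hpprime⟩
  have : (fun x : K => x ^ (Fintype.card F) ^ i) = ⇑(iterateFrobenius K p (m * i)) := by
    funext x
    rw [iterateFrobenius_def, hcard, pow_mul]
  rw [this]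
  exact (iterateFrobenius K p (m * i)).injective

lemma aux_prod_d [FiniteDimensional F K] (α : K) :
    ∏ j ∈ Finset.range (minpoly F α).natDegree, (X - C (α ^ (Fintype.card F) ^ j)) =
      (minpoly F α).map (algebraMap F K) := by
  classical
  set q := Fintype.card F with hqdef
  have hint : IsIntegral F α := IsIntegral.of_finite F α
  set d := (minpoly F α).natDegree with hd
  have hd1 : 1 ≤ d := minpoly.natDegree_pos hint
  set P : K[X] := (minpoly F α).map (algebraMap F K) with hP
  have hPmonic : P.Monic := (minpoly.monic hint).map _
  have hPdeg : P.natDegree = d := by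
    rw [hP, natDegree_map]
  have hPne : P ≠ 0 := hPmonic.ne_zero
  have hroot : ∀ j : ℕ, P.eval (α ^ q ^ j) = 0 := by
    intro j
    have : P.eval (α ^ q ^ j) = aeval (α ^ q ^ j) (minpoly F α) := by
      rw [hP, aeval_def, eval_map]
    rw [this, aux_aeval_pow_pow, minpoly.aeval, zero_pow (pow_ne_zero _ Fintype.card_ne_zero)]
  -- injectivity on range d
  have hinj : ∀ i ∈ Finset.range d, ∀ j ∈ Finset.range d,
      α ^ q ^ i = α ^ q ^ j → i = j := by
    have key : ∀ i j, i < j → j < d → α ^ q ^ i = α ^ q ^ j → False := by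
      intro i j hij hjd heq
      have he : α ^ q ^ (j - i) = α := by
        apply aux_pow_inj (F := F) (K := K) i
        simp only
        rw [← pow_mul, ← pow_add, Nat.sub_add_cancel hij.le]
        exact heq.symm
      have := aux_min_period α (j - i) (by omega) he
      omega
    intro i hi j hj heq
    simp only [Finset.mem_range] at hi hj
    rcases lt_trichotomy i j with h | h | h
    · exact absurd heq (fun he => key i j h hj he)
    · exact h
    · exact absurd heq.symm (fun he => key j i h hi he)
  -- the multiset of roots
  set M : Multiset K := (Finset.range d).val.map (fun j => α ^ q ^ j) with hM
  have hMnodup : M.Nodup := Multiset.Nodup.map_on hinj (Finset.range d).nodup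
  have hMle : M ≤ P.roots := by
    rw [Multiset.le_iff_subset hMnodup]
    intro x hx
    rw [hM, Multiset.mem_map] at hx
    obtain ⟨j, _, rfl⟩ := hx
    rw [mem_roots hPne]
    exact hroot j
  have hdvd : (M.map fun a => X - C a).prod ∣ P :=
    (Multiset.prod_X_sub_C_dvd_iff_le_roots hPne M).mpr hMle
  have hprod_eq : ∏ j ∈ Finset.range d, (X - C (α ^ q ^ j)) = (M.map fun a => X - C a).prod := by
    rw [hM, Multiset.map_map, Finset.prod_eq_multiset_prod]
    rfl
  rw [hprod_eq]
  -- both monic of degree d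
  have hQmonic : ((M.map fun a => X - C a).prod).Monic :=
    monic_multiset_prod_of_monic _ _ (fun a _ => monic_X_sub_C a)
  have hQdeg : ((M.map fun a => X - C a).prod).natDegree = d := by
    rw [natDegree_multiset_prod_of_monic _ (fun a ha => by
      rw [Multiset.mem_map] at ha; obtain ⟨b, _, rfl⟩ := ha; exact monic_X_sub_C b)]
    rw [hM, Multiset.map_map, Multiset.map_map]
    simp only [Function.comp_apply, natDegree_X_sub_C, Multiset.map_const', Multiset.sum_replicate,
      smul_eq_mul, mul_one, Multiset.card_range]
    exact Finset.card_range d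
  obtain ⟨c, hc⟩ := hdvd
  have hcne : c ≠ 0 := by rintro rfl; simp [hc] at hPne
  have hcdeg : c.natDegree = 0 := by
    have := natDegree_mul hQmonic.ne_zero hcne
    rw [← hc, hPdeg, hQdeg] at this
    omega
  have hcmonic : c.Monic := by
    have := hPmonic
    rw [hc] at this
    exact hQmonic.of_mul_monic_left this
  have : c = 1 := hcmonic.natDegree_eq_zero.mp hcdeg
  rw [hc, this, mul_one]

lemma aux_period [FiniteDimensional F K] (α : K) (j : ℕ) :
    α ^ (Fintype.card F) ^ (j + (minpoly F α).natDegree) = α ^ (Fintype.card F) ^ j := by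
  rw [pow_add, mul_comm, pow_mul, aux_fix_d]

lemma key_prod [FiniteDimensional F K] (α : K) {n : ℕ} (hn : Module.finrank F K = n) :
    ∏ j ∈ Finset.range n, (X - C (α ^ (Fintype.card F) ^ j)) =
      ((minpoly F α) ^ (n / (minpoly F α).natDegree)).map (algebraMap F K) := by
  have hint : IsIntegral F α := IsIntegral.of_finite F α
  set q := Fintype.card F
  set d := (minpoly F α).natDegree with hd
  have hd1 : 1 ≤ d := minpoly.natDegree_pos hint
  have hdvd : d ∣ n := hn ▸ minpoly.degree_dvd hint
  obtain ⟨m, hm⟩ := hdvd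
  have hmn : n / d = m := by rw [hm, Nat.mul_div_cancel_left _ hd1]
  rw [hmn, hm]
  -- periodicity in blocks
  have hper : ∀ i j : ℕ, α ^ q ^ (d * i + j) = α ^ q ^ j := by
    intro i
    induction i with
    | zero => simp
    | succ i ih =>
      intro j
      have : d * (i + 1) + j = (d * i + j) + d := by ring
      rw [this, aux_period (F := F) α (d * i + j), ih]
  clear hm hmn hn
  induction m with
  | zero => simp
  | succ m ih =>
    rw [Nat.mul_succ, Finset.prod_range_add, ih, pow_succ, Polynomial.map_mul]
    congr 1
    rw [← aux_prod_d (F := F) (K := K) α]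
    apply Finset.prod_congr rfl
    intro j _
    rw [hper m j]

lemma key_splits [FiniteDimensional F K] {n : ℕ} (hn : Module.finrank F K = n) (hn1 : 1 ≤ n)
    (f : F[X]) (hmf : f.Monic) (hif : Irreducible f) (hdvd : f.natDegree ∣ n) :
    Splits (f.map (algebraMap F K)) := by
  classical
  set q := Fintype.card F with hq
  have hq2 : 1 < q := Fintype.one_lt_card
  -- Step 1: f ∣ X^(q^n) - X in F[X]
  have hstep1 : f ∣ (X ^ q ^ n - X : F[X]) := by
    haveI : Fact (Irreducible f) := ⟨hif⟩
    let E := AdjoinRoot f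
    have hfne : f ≠ 0 := hif.ne_zero
    let pb := AdjoinRoot.powerBasis hfne
    haveI : FiniteDimensional F E := pb.finite
    haveI : Fintype E := Module.fintypeOfFintype (Module.finBasis F E)
    have hfr : Module.finrank F E = f.natDegree := by
      rw [pb.finrank, AdjoinRoot.powerBasis_dim]
    have hcardE : Fintype.card E = q ^ f.natDegree := by
      rw [Module.card_eq_pow_finrank (K := F) (V := E), hfr]
    have hminpoly : minpoly F (AdjoinRoot.root f) = f := by
      rw [AdjoinRoot.minpoly_root hfne, hmf.leadingCoeff, inv_one, map_one, mul_one]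
    have hfixd : (AdjoinRoot.root f) ^ q ^ f.natDegree = AdjoinRoot.root f := by
      rw [← hcardE]; exact FiniteField.pow_card _
    obtain ⟨m, hm⟩ := hdvd
    have hfixn : (AdjoinRoot.root f) ^ q ^ n = AdjoinRoot.root f := by
      have hiter : ∀ (a : E) (s : ℕ), a ^ s = a → ∀ m, a ^ s ^ m = a := by
        intro a s hs m
        induction m with
        | zero => simp
        | succ m ih => rw [pow_succ, pow_mul, ih, hs]
      rw [hm, pow_mul]
      exact hiter _ _ hfixd m
    rw [← hminpoly]
    apply minpoly.dvd
    simp only [map_sub, map_pow, aeval_X]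
    rw [hfixn, sub_self]
  -- Step 2: X^(q^n) - X splits in K
  haveI : Fintype K := Module.fintypeOfFintype (Module.finBasis F K)
  have hcardK : Fintype.card K = q ^ n := by rw [Module.card_eq_pow_finrank (K := F) (V := K), hn]
  have hbigne : (X ^ q ^ n - X : F[X]) ≠ 0 :=
    FiniteField.X_pow_card_pow_sub_X_ne_zero F (by omega) hq2
  have hmap : (X ^ q ^ n - X : F[X]).map (algebraMap F K) = (X ^ Fintype.card K - X : K[X]) := by
    rw [Polynomial.map_sub, Polynomial.map_pow, map_X, hcardK]
  have hsplitsbig : Splits ((X ^ q ^ n - X : F[X]).map (algebraMap F K)) := by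
    rw [hmap, splits_iff_card_roots,
      FiniteField.roots_X_pow_card_sub_X K, ← Finset.card_def, Finset.card_univ,
      FiniteField.X_pow_card_sub_X_natDegree_eq K Fintype.one_lt_card]
  exact Splits.of_dvd hsplitsbig (Polynomial.map_ne_zero hbigne) (Polynomial.map_dvd _ hstep1)

lemma key_roots [FiniteDimensional F K] {n : ℕ} (hn : Module.finrank F K = n) (hn1 : 1 ≤ n)
    (f : F[X]) (hmf : f.Monic) (hif : Irreducible f) (hdvd : f.natDegree ∣ n) :
    (f.map (algebraMap F K)).roots.Nodup ∧
      Multiset.card (f.map (algebraMap F K)).roots = f.natDegree := by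
  constructor
  · exact nodup_roots ((PerfectField.separable_of_irreducible hif).map)
  · rw [splits_iff_card_roots.mp
      (key_splits hn hn1 f hmf hif hdvd), natDegree_map]

lemma aux_X_pow_dvd_map_iff (m : ℕ) (p : F[X]) :
    (X : K[X]) ^ m ∣ p.map (algebraMap F K) ↔ (X : F[X]) ^ m ∣ p := by
  simp only [X_pow_dvd_iff, coeff_map]
  refine forall₂_congr fun d _ => ?_
  exact ⟨fun hc => (algebraMap F K).injective (by simpa using hc), fun hc => by rw [hc, map_zero]⟩

lemma aux_reverse_map (p : F[X]) :
    (p.map (algebraMap F K)).reverse = p.reverse.map (algebraMap F K) := by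
  unfold Polynomial.reverse
  rw [natDegree_map_eq_of_injective (algebraMap F K).injective, reflect_map]

lemma typeI_map_iff (ℓ t : ℕ) (f g : F[X]) :
    TypeIEquiv ℓ t (f.map (algebraMap F K)) (g.map (algebraMap F K)) ↔ TypeIEquiv ℓ t f g := by
  unfold TypeIEquiv
  rw [aux_reverse_map, aux_reverse_map, ← Polynomial.map_sub, ← Polynomial.map_sub,
    aux_X_pow_dvd_map_iff, aux_X_pow_dvd_map_iff]

end helpers

theorem typeI_irreducible_count_eq_char_poly_count
    (F : Type*) [Field F] [Fintype F] (q : ℕ) (hq : Fintype.card F = q)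
    (K : Type*) [Field K] [Algebra F K] [FiniteDimensional F K]
    (n : ℕ) (hn : Module.finrank F K = n) (hn1 : 1 ≤ n)
    (ℓ t : ℕ) (hℓ : 1 ≤ ℓ) (ht : 1 ≤ t)
    (h : Polynomial F) (hmonic : h.Monic) (hdeg : h.natDegree = ℓ + t)
    (h0 : h.eval 0 ≠ 0) :
    ∑ k ∈ n.divisors, (n / k) *
      {f : Polynomial F | f.Monic ∧ Irreducible f ∧ f.natDegree = n / k ∧
        f.eval 0 ≠ 0 ∧ TypeIEquiv ℓ t (f ^ k) h}.ncard
    = {α : K | α ≠ 0 ∧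
        TypeIEquiv ℓ t (∏ j ∈ Finset.range n, (X - C (α ^ q ^ j)))
          (h.map (algebraMap F K))}.ncard := by
  classical
  subst hq
  have hn0 : n ≠ 0 := by omega
  haveI : Fintype K := Module.fintypeOfFintype (Module.finBasis F K)
  set Q : K → K[X] := fun α => ∏ j ∈ Finset.range n, (X - C (α ^ Fintype.card F ^ j)) with hQ
  set SF : Finset K := Finset.univ.filter
    (fun α => α ≠ 0 ∧ TypeIEquiv ℓ t (Q α) (h.map (algebraMap F K))) with hSF
  -- RHS as a Finset card
  have hRHSset : {α : K | α ≠ 0 ∧ TypeIEquiv ℓ t (Q α) (h.map (algebraMap F K))} = ↑SF := by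
    ext α; simp [hSF]
  rw [show {α : K | α ≠ 0 ∧
        TypeIEquiv ℓ t (∏ j ∈ Finset.range n, (X - C (α ^ Fintype.card F ^ j)))
          (h.map (algebraMap F K))} = ↑SF from hRHSset, Set.ncard_coe_finset]
  set Φ : K → F[X] := fun α => minpoly F α with hΦ
  set T : Finset F[X] := SF.image Φ with hT
  -- basic facts about minpolys of elements of SF
  have hC1 : ∀ f ∈ T, f.Monic ∧ Irreducible f ∧ f.natDegree ∣ n ∧ 1 ≤ f.natDegree ∧
      f.eval 0 ≠ 0 ∧ TypeIEquiv ℓ t (f ^ (n / f.natDegree)) h := by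
    intro f hf
    rw [hT, Finset.mem_image] at hf
    obtain ⟨α, hαSF, rfl⟩ := hf
    rw [hSF, Finset.mem_filter] at hαSF
    obtain ⟨-, hα0, hαT⟩ := hαSF
    have hint : IsIntegral F α := IsIntegral.of_finite F α
    have hmf : (Φ α).Monic := minpoly.monic hint
    have hif : Irreducible (Φ α) := minpoly.irreducible hint
    have hdvd : (Φ α).natDegree ∣ n := hn ▸ minpoly.degree_dvd hint
    have hd1 : 1 ≤ (Φ α).natDegree := minpoly.natDegree_pos hint
    refine ⟨hmf, hif, hdvd, hd1, ?_, ?_⟩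
    · -- eval 0 ≠ 0
      intro he0
      have hXdvd : X ∣ Φ α := by
        rw [X_dvd_iff, coeff_zero_eq_eval_zero, he0]
      obtain ⟨c, hc⟩ := hXdvd
      have hc0 : c ≠ 0 := by
        rintro rfl; rw [mul_zero] at hc; exact hif.ne_zero hc
      have haev : aeval α (Φ α) = 0 := minpoly.aeval F α
      rw [hc, map_mul, aeval_X, mul_eq_zero] at haev
      have hcz : aeval α c = 0 := haev.resolve_left hα0
      have hdle : (Φ α).natDegree ≤ c.natDegree :=
        natDegree_le_of_dvd (minpoly.dvd F α hcz) hc0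
      have : (Φ α).natDegree = c.natDegree + 1 := by
        rw [hc, natDegree_mul X_ne_zero hc0, natDegree_X]; omega
      omega
    · -- TypeIEquiv (f ^ (n/d)) h
      have hQα : Q α = ((Φ α) ^ (n / (Φ α).natDegree)).map (algebraMap F K) := key_prod α hn
      rw [hQα] at hαT
      exact (typeI_map_iff ℓ t _ h).mp hαT
  -- fibers are root sets
  have hfiber : ∀ f ∈ T, SF.filter (fun α => Φ α = f)
      = (f.map (algebraMap F K)).roots.toFinset := by
    intro f hf
    obtain ⟨hmf, hif, hdvd, hd1, he0, hTI⟩ := hC1 f hf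
    have hmapne : f.map (algebraMap F K) ≠ 0 :=
      (hmf.map (algebraMap F K)).ne_zero
    ext β
    rw [Finset.mem_filter, Multiset.mem_toFinset, mem_roots hmapne]
    constructor
    · rintro ⟨-, rfl⟩
      simp only [IsRoot.def, eval_map, ← aeval_def]
      exact minpoly.aeval F β
    · intro hroot
      have haev : aeval β f = 0 := by
        rw [aeval_def, ← eval_map]; exact hroot
      have hmin : Φ β = f := (minpoly.eq_of_irreducible_of_monic hif haev hmf).symm
      have hβ0 : β ≠ 0 := by
        rintro rfl
        rw [aeval_def, eval₂_at_zero] at haev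
        exact he0 (by
          rw [← coeff_zero_eq_eval_zero]
          exact (algebraMap F K).injective (by simpa using haev))
      refine ⟨?_, hmin⟩
      rw [hSF, Finset.mem_filter]
      refine ⟨Finset.mem_univ _, hβ0, ?_⟩
      have hQβ : Q β = ((Φ β) ^ (n / (Φ β).natDegree)).map (algebraMap F K) := key_prod β hn
      rw [hQβ, hmin]
      exact (typeI_map_iff ℓ t _ h).mpr hTI
  -- fiber cards
  have hfibercard : ∀ f ∈ T, (SF.filter (fun α => Φ α = f)).card = f.natDegree := by
    intro f hf
    obtain ⟨hmf, hif, hdvd, hd1, he0, hTI⟩ := hC1 f hf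
    obtain ⟨hnodup, hcard⟩ := key_roots hn hn1 f hmf hif hdvd
    rw [hfiber f hf, Multiset.toFinset_card_of_nodup hnodup, hcard]
  -- main count
  have hmain : SF.card = ∑ f ∈ T, f.natDegree := by
    rw [Finset.card_eq_sum_card_image Φ SF]
    exact Finset.sum_congr rfl hfibercard
  -- fiberwise over divisors
  have hmaps : ∀ f ∈ T, n / f.natDegree ∈ n.divisors := by
    intro f hf
    obtain ⟨-, -, hdvd, -, -, -⟩ := hC1 f hf
    exact Nat.mem_divisors.mpr ⟨Nat.div_dvd_of_dvd hdvd, hn0⟩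
  have hsplit : ∑ f ∈ T, f.natDegree
      = ∑ k ∈ n.divisors, ∑ f ∈ T.filter (fun f => n / f.natDegree = k), f.natDegree :=
    (Finset.sum_fiberwise_of_maps_to hmaps _).symm
  -- identify fibers with degree-filtered sets
  have hfiltereq : ∀ k ∈ n.divisors, T.filter (fun f => n / f.natDegree = k)
      = T.filter (fun f => f.natDegree = n / k) := by
    intro k hk
    obtain ⟨hkd, -⟩ := Nat.mem_divisors.mp hk
    apply Finset.filter_congr
    intro f hf
    obtain ⟨-, -, hdvd, -, -, -⟩ := hC1 f hf
    constructor
    · rintro rfl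
      simp only [Nat.div_div_self hdvd hn0]
    · rintro hfd
      rw [hfd, Nat.div_div_self hkd hn0]
  -- describe the LHS sets
  have hC2 : ∀ k ∈ n.divisors, {f : Polynomial F | f.Monic ∧ Irreducible f ∧
      f.natDegree = n / k ∧ f.eval 0 ≠ 0 ∧ TypeIEquiv ℓ t (f ^ k) h}
      = ↑(T.filter (fun f => f.natDegree = n / k)) := by
    intro k hk
    obtain ⟨hkd, -⟩ := Nat.mem_divisors.mp hk
    have hnk : n / (n / k) = k := Nat.div_div_self hkd hn0
    ext f
    simp only [Set.mem_setOf_eq, Finset.coe_filter, Set.mem_setOf_eq, Finset.mem_coe]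
    constructor
    · rintro ⟨hmf, hif, hfd, he0, hTI⟩
      have hdvd : f.natDegree ∣ n := by rw [hfd]; exact Nat.div_dvd_of_dvd hkd
      -- find a root of f in K
      obtain ⟨hnodup, hcard⟩ := key_roots hn hn1 f hmf hif hdvd
      have hd1 : 1 ≤ f.natDegree := hif.natDegree_pos
      have : (f.map (algebraMap F K)).roots ≠ 0 := by
        intro hz; rw [hz] at hcard; simp at hcard; omega
      obtain ⟨β, hβ⟩ := Multiset.exists_mem_of_ne_zero this
      have hmapne : f.map (algebraMap F K) ≠ 0 := (hmf.map (algebraMap F K)).ne_zero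
      have hroot := (mem_roots hmapne).mp hβ
      have haev : aeval β f = 0 := by rw [aeval_def, ← eval_map]; exact hroot
      have hmin : Φ β = f := (minpoly.eq_of_irreducible_of_monic hif haev hmf).symm
      have hβ0 : β ≠ 0 := by
        rintro rfl
        rw [aeval_def, eval₂_at_zero] at haev
        exact he0 (by
          rw [← coeff_zero_eq_eval_zero]
          exact (algebraMap F K).injective (by simpa using haev))
      have hβSF : β ∈ SF := by
        rw [hSF, Finset.mem_filter]
        refine ⟨Finset.mem_univ _, hβ0, ?_⟩
        have hQβ : Q β = ((Φ β) ^ (n / (Φ β).natDegree)).map (algebraMap F K) := key_prod β hn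
        rw [hQβ, hmin, hfd, hnk]
        exact (typeI_map_iff ℓ t _ h).mpr hTI
      exact ⟨Finset.mem_image.mpr ⟨β, hβSF, hmin⟩, hfd⟩
    · rintro ⟨hfT, hfd⟩
      obtain ⟨hmf, hif, hdvd, hd1, he0, hTI⟩ := hC1 f hfT
      rw [hfd, hnk] at hTI
      exact ⟨hmf, hif, hfd, he0, hTI⟩
  -- put it together
  calc ∑ k ∈ n.divisors, (n / k) *
      {f : Polynomial F | f.Monic ∧ Irreducible f ∧ f.natDegree = n / k ∧
        f.eval 0 ≠ 0 ∧ TypeIEquiv ℓ t (f ^ k) h}.ncard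
      = ∑ k ∈ n.divisors, (n / k) * (T.filter (fun f => f.natDegree = n / k)).card := by
        refine Finset.sum_congr rfl fun k hk => ?_
        rw [hC2 k hk, Set.ncard_coe_finset]
    _ = ∑ k ∈ n.divisors, ∑ f ∈ T.filter (fun f => n / f.natDegree = k), f.natDegree := by
        refine Finset.sum_congr rfl fun k hk => ?_
        rw [hfiltereq k hk]
        rw [Finset.sum_const_nat (m := n / k) (fun f hf => (Finset.mem_filter.mp hf).2),
          mul_comm]
    _ = SF.card := by rw [← hsplit, ← hmain]
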